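/- If K is an n-dimensional convex body with smooth boundary which is not of constant width, then K can be written as a union of n subsets, each of diameter strictly smaller than the diameter of K. -/

import Mathlib

open RealInnerProductSpace
open RealInnerProductSpace

/-- The width of a set `K` in the direction of a vector `u`. -/
noncomputable def setWidth {n : ℕ} (K : Set (EuclideanSpace ℝ (Fin n)))
    (u : EuclideanSpace ℝ (Fin n)) : ℝ :=
  sSup ((fun x => ⟪x, u⟫) '' K) - sInf ((fun x => ⟪x, u⟫) '' K)

lemma isCompact_exists_dist_eq_diam {α : Type*} [MetricSpace α] {s : Set α}
    (hs : IsCompact s) (hne : s.Nonempty) :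
    ∃ x ∈ s, ∃ y ∈ s, dist x y = Metric.diam s := by
  obtain ⟨p, hp, hmax⟩ := (hs.prod hs).exists_isMaxOn (hne.prod hne)
    (continuous_dist.continuousOn)
  refine ⟨p.1, hp.1, p.2, hp.2, le_antisymm
    (Metric.dist_le_diam_of_mem (hs.isBounded) hp.1 hp.2) ?_⟩
  exact Metric.diam_le_of_forall_dist_le dist_nonneg fun x hx y hy =>
    hmax (Set.mk_mem_prod hx hy)

section helpers
variable {E : Type*} [NormedAddCommGroup E] [InnerProductSpace ℝ E]

lemma maxpt {K : Set E} {D : ℝ} (hD : 0 < D)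
    (hb : ∀ z ∈ K, ∀ w ∈ K, dist z w ≤ D)
    {x u : E} (hu : ‖u‖ = 1) (hx : x ∈ K) (_hy : x + D • u ∈ K)
    {z : E} (hz : z ∈ K) : ⟪z, u⟫ ≤ ⟪x + D • u, u⟫ := by
  set y := x + D • u with hy'
  have h1 : ‖z - x‖ ≤ D := by have := hb z hz x hx; rwa [dist_eq_norm] at this
  have hzx : z - x = (z - y) + D • u := by rw [hy']; abel
  have expand : ‖z - x‖^2 = ‖z - y‖^2 + 2*(D*⟪z - y, u⟫) + D^2 := by
    rw [hzx, norm_add_sq_real, real_inner_smul_right, norm_smul, Real.norm_eq_abs,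
      abs_of_pos hD, hu]
    ring
  have h2 : ‖z - x‖^2 ≤ D^2 := by
    have := norm_nonneg (z - x)
    nlinarith
  have h3 : ⟪z - y, u⟫ ≤ 0 := by nlinarith [sq_nonneg ‖z - y‖]
  have h4 := inner_sub_left (𝕜 := ℝ) z y u
  have : ⟪z, u⟫ - ⟪y, u⟫ ≤ 0 := by rw [← h4]; exact h3
  linarith

lemma frontierpt {K : Set E} (hKcl : IsClosed K)
    {y ν : E} (hyK : y ∈ K) (hν : ‖ν‖ = 1)
    (hmax : ∀ z ∈ K, ⟪z, ν⟫ ≤ ⟪y, ν⟫) : y ∈ frontier K := by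
  rw [hKcl.frontier_eq]
  refine ⟨hyK, fun hint => ?_⟩
  rw [mem_interior_iff_mem_nhds, Metric.mem_nhds_iff] at hint
  obtain ⟨r, hr, hball⟩ := hint
  have h2 : y + (r/2) • ν ∈ K := by
    apply hball
    rw [Metric.mem_ball, dist_self_add_left, norm_smul, Real.norm_eq_abs, hν]
    rw [abs_of_pos (by linarith)]
    linarith
  have h3 := hmax _ h2
  rw [inner_add_left, real_inner_smul_left, real_inner_self_eq_norm_sq, hν] at h3
  nlinarith

end helpers

lemma setWidth_ge {n : ℕ} {K : Set (EuclideanSpace ℝ (Fin n))} (hKc : IsCompact K)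
    {x y : EuclideanSpace ℝ (Fin n)} (hx : x ∈ K) (hy : y ∈ K)
    (u : EuclideanSpace ℝ (Fin n)) : ⟪y, u⟫ - ⟪x, u⟫ ≤ setWidth K u := by
  have hc : Continuous fun z : EuclideanSpace ℝ (Fin n) => ⟪z, u⟫ :=
    continuous_id.inner continuous_const
  have hba : BddAbove ((fun z => ⟪z, u⟫) '' K) := (hKc.image hc).bddAbove
  have hbb : BddBelow ((fun z => ⟪z, u⟫) '' K) := (hKc.image hc).bddBelow
  have h1 : ⟪y, u⟫ ≤ sSup ((fun z => ⟪z, u⟫) '' K) := le_csSup hba ⟨y, hy, rfl⟩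
  have h2 : sInf ((fun z => ⟪z, u⟫) '' K) ≤ ⟪x, u⟫ := csInf_le hbb ⟨x, hx, rfl⟩
  unfold setWidth
  linarith

lemma setWidth_le {n : ℕ} {K : Set (EuclideanSpace ℝ (Fin n))} (hKc : IsCompact K)
    (hKne : K.Nonempty) {u : EuclideanSpace ℝ (Fin n)} (hu : ‖u‖ = 1) :
    setWidth K u ≤ Metric.diam K := by
  have hc : Continuous fun z : EuclideanSpace ℝ (Fin n) => ⟪z, u⟫ :=
    continuous_id.inner continuous_const
  have himg : IsCompact ((fun z => ⟪z, u⟫) '' K) := hKc.image hc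
  have hne' : ((fun z => ⟪z, u⟫) '' K).Nonempty := hKne.image _
  obtain ⟨z1, hz1, hsup⟩ := himg.sSup_mem hne'
  obtain ⟨z0, hz0, hinf⟩ := himg.sInf_mem hne'
  unfold setWidth
  rw [← hsup, ← hinf]
  have h1 : ⟪z1, u⟫ - ⟪z0, u⟫ = ⟪z1 - z0, u⟫ := (inner_sub_left _ _ _).symm
  rw [h1]
  calc ⟪z1 - z0, u⟫ ≤ ‖z1 - z0‖ * ‖u‖ := real_inner_le_norm _ _
    _ = dist z1 z0 := by rw [hu, mul_one, dist_eq_norm]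
    _ ≤ Metric.diam K := Metric.dist_le_diam_of_mem hKc.isBounded hz1 hz0

lemma lin_alg {n : ℕ} {v u : EuclideanSpace ℝ (Fin n)} (hv : ‖v‖ = 1) (hu : ‖u‖ = 1)
    {c : ℝ}
    (heq : ∀ k, (if 0 ≤ v k then (1:ℝ) else -1) * (u k - v k * ⟪u, v⟫) = c) :
    u = v ∨ u = -v := by
  set t : ℝ := ⟪u, v⟫ with ht'
  have huk : ∀ k, u k = t * v k + c * (if 0 ≤ v k then (1:ℝ) else -1) := by
    intro k
    have h := heq k
    by_cases hk : 0 ≤ v k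
    · simp only [hk, if_true, one_mul] at h ⊢
      linarith
    · simp only [hk, if_false] at h ⊢
      linarith
  have hinnerform : ∀ a b : EuclideanSpace ℝ (Fin n), ⟪a, b⟫ = ∑ k, a k * b k := by
    intro a b
    simp [PiLp.inner_apply, RCLike.inner_apply, mul_comm]
  have hvv : (∑ k, v k * v k) = 1 := by
    have h1 : ⟪v, v⟫ = 1 := by
      rw [real_inner_self_eq_norm_sq, hv]; norm_num
    rw [hinnerform] at h1
    exact h1
  have habs : ∀ k, (if 0 ≤ v k then (1:ℝ) else -1) * v k = |v k| := by
    intro k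
    by_cases hk : 0 ≤ v k
    · simp [hk, abs_of_nonneg hk]
    · simp [hk, abs_of_neg (lt_of_not_ge hk)]
  have hsum : t = t * 1 + c * ∑ k, |v k| := by
    have h0 : t = ∑ k, u k * v k := by rw [ht', hinnerform]
    have h1 : ∀ k, u k * v k = t * (v k * v k) + c * ((if 0 ≤ v k then (1:ℝ) else -1) * v k) := by
      intro k; rw [huk k]; ring
    have h2 : ∑ k, (if 0 ≤ v k then (1:ℝ) else -1) * v k = ∑ k, |v k| :=
      Finset.sum_congr rfl fun k _ => habs k
    have h3 : ∑ k, u k * v k = t * 1 + c * ∑ k, |v k| := by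
      rw [Finset.sum_congr rfl (fun k _ => h1 k), Finset.sum_add_distrib, ← Finset.mul_sum,
        ← Finset.mul_sum, hvv, h2]
    linarith [h0, h3]
  have hS : 0 < ∑ k, |v k| := by
    have hvne : v ≠ 0 := by
      intro h; rw [h, norm_zero] at hv; exact one_ne_zero hv.symm
    have hnn : ∀ k ∈ Finset.univ, (0:ℝ) ≤ |v k| := fun k _ => abs_nonneg _
    rcases lt_or_eq_of_le (Finset.sum_nonneg hnn) with h | h
    · exact h
    · exfalso
      apply hvne
      have hz := (Finset.sum_eq_zero_iff_of_nonneg hnn).mp h.symm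
      ext k
      have := hz k (Finset.mem_univ k)
      simpa [abs_eq_zero] using this
  have hc : c = 0 := by
    have hcs : c * (∑ k, |v k|) = 0 := by linarith
    exact (mul_eq_zero.mp hcs).resolve_right (ne_of_gt hS)
  have huv : u = t • v := by
    ext k
    have := huk k
    rw [hc] at this
    simpa [PiLp.smul_apply, smul_eq_mul] using this
  have htabs : |t| = 1 := by
    rw [huv, norm_smul, hv, mul_one, Real.norm_eq_abs] at hu
    exact hu
  rcases (abs_eq (by norm_num : (0:ℝ) ≤ 1)).mp htabs with h | h
  · left; rw [huv, h, one_smul]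
  · right; rw [huv, h, neg_one_smul]

/-- Lenz: a smooth n-dimensional convex body which is not of constant width can be
written as a union of n subsets, each of diameter strictly smaller than the
diameter of the body. -/
theorem smooth_nonconstant_width_borsuk (n : ℕ)
    (K : Set (EuclideanSpace ℝ (Fin n)))
    (hKc : IsCompact K) (hKconv : Convex ℝ K) (hKint : (interior K).Nonempty)
    (hsmooth : ∀ x ∈ frontier K,
      ∃! u : EuclideanSpace ℝ (Fin n), ‖u‖ = 1 ∧ ∀ y ∈ K, ⟪y, u⟫ ≤ ⟪x, u⟫)
    (hnotcw : ∃ u v : EuclideanSpace ℝ (Fin n),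
      ‖u‖ = 1 ∧ ‖v‖ = 1 ∧ setWidth K u ≠ setWidth K v) :
    ∃ X : Fin n → Set (EuclideanSpace ℝ (Fin n)),
      K = ⋃ i, X i ∧ ∀ i, Metric.diam (X i) < Metric.diam K := by
  classical
  obtain ⟨u0, v0, hu0, hv0, hne0⟩ := hnotcw
  rcases Nat.eq_zero_or_pos n with hn | hn
  · exfalso
    subst hn
    have hz : u0 = 0 := by
      ext i
      exact absurd i.2 (by omega)
    rw [hz, norm_zero] at hu0
    exact zero_ne_one hu0
  haveI : Nonempty (Fin n) := ⟨⟨0, hn⟩⟩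
  set D := Metric.diam K with hD'
  have hKne : K.Nonempty := hKint.mono interior_subset
  have hb : ∀ z ∈ K, ∀ w ∈ K, dist z w ≤ D := fun z hz w hw =>
    Metric.dist_le_diam_of_mem hKc.isBounded hz hw
  -- D > 0
  have hD : 0 < D := by
    obtain ⟨x, hx⟩ := hKint
    rw [mem_interior_iff_mem_nhds, Metric.mem_nhds_iff] at hx
    obtain ⟨r, hr, hball⟩ := hx
    have h1 : x ∈ K := hball (Metric.mem_ball_self hr)
    have h2 : x + (r/2) • EuclideanSpace.single (⟨0, hn⟩ : Fin n) (1:ℝ) ∈ K := by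
      apply hball
      rw [Metric.mem_ball, dist_self_add_left, norm_smul, Real.norm_eq_abs,
        EuclideanSpace.norm_single, abs_of_pos (by linarith)]
      simp only [norm_one, mul_one]
      linarith
    have h3 : dist (x + (r/2) • EuclideanSpace.single (⟨0, hn⟩ : Fin n) (1:ℝ)) x = r/2 := by
      rw [dist_self_add_left, norm_smul, Real.norm_eq_abs,
        EuclideanSpace.norm_single, abs_of_pos (by linarith)]
      simp
    have h4 := hb _ h2 _ h1
    rw [h3] at h4
    linarith
  -- pick direction with small width
  have hvex : ∃ v : EuclideanSpace ℝ (Fin n), ‖v‖ = 1 ∧ setWidth K v < D := by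
    rcases hne0.lt_or_gt with h | h
    · exact ⟨u0, hu0, lt_of_lt_of_le h (setWidth_le hKc hKne hv0)⟩
    · exact ⟨v0, hv0, lt_of_lt_of_le h (setWidth_le hKc hKne hu0)⟩
  obtain ⟨v, hv1, hvlt⟩ := hvex
  -- no diameter pair in direction v
  have hvN : ∀ x ∈ K, x + D • v ∉ K := by
    intro x hx hy
    have h1 := setWidth_ge hKc hx hy v
    rw [inner_add_left, real_inner_smul_left, real_inner_self_eq_norm_sq, hv1] at h1
    simp only [one_pow, mul_one] at h1
    linarith
  -- test vectors
  set a : Fin n → EuclideanSpace ℝ (Fin n) := fun k =>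
    (if 0 ≤ v k then (1:ℝ) else -1) • (EuclideanSpace.single k (1:ℝ) - v k • v) with ha'
  have hinner_a : ∀ (u : EuclideanSpace ℝ (Fin n)) (k : Fin n),
      ⟪u, a k⟫ = (if 0 ≤ v k then (1:ℝ) else -1) * (u k - v k * ⟪u, v⟫) := by
    intro u k
    rw [ha']
    simp only [real_inner_smul_right, inner_sub_right, real_inner_smul_right]
    congr 2
    simp [EuclideanSpace.inner_single_right]
  -- the families of sets
  set T : Fin n → Set (EuclideanSpace ℝ (Fin n) × EuclideanSpace ℝ (Fin n)) := fun j =>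
    {p | p.1 ∈ K ∧ ‖p.2‖ = 1 ∧ p.1 + D • p.2 ∈ K ∧ ∀ k, ⟪p.2, a k⟫ ≤ ⟪p.2, a j⟫} with hT'
  set G : Fin n → Set (EuclideanSpace ℝ (Fin n)) := fun j =>
    (fun p : EuclideanSpace ℝ (Fin n) × EuclideanSpace ℝ (Fin n) => p.1 + D • p.2) '' T j
    with hG'
  have hGK : ∀ j, G j ⊆ K := by
    rintro j y ⟨p, ⟨_, _, hp3, _⟩, rfl⟩
    exact hp3
  have hGc : ∀ j, IsCompact (G j) := by
    intro j
    have hTeq : T j = (K ×ˢ Metric.sphere 0 1) ∩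
        ({p | p.1 + D • p.2 ∈ K} ∩ ⋂ k, {p : EuclideanSpace ℝ (Fin n) × EuclideanSpace ℝ (Fin n) |
          ⟪p.2, a k⟫ ≤ ⟪p.2, a j⟫}) := by
      ext p
      simp only [hT', Set.mem_setOf_eq, Set.mem_inter_iff, Set.mem_prod,
        mem_sphere_zero_iff_norm, Set.mem_iInter]
      tauto
    have hcont : Continuous fun p : EuclideanSpace ℝ (Fin n) × EuclideanSpace ℝ (Fin n) =>
        p.1 + D • p.2 := continuous_fst.add (continuous_snd.const_smul D)
    have hTc : IsCompact (T j) := by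
      rw [hTeq]
      exact (hKc.prod (isCompact_sphere 0 1)).inter_right
        ((hKc.isClosed.preimage hcont).inter (isClosed_iInter fun k =>
          isClosed_le ((continuous_snd.inner continuous_const))
            ((continuous_snd.inner continuous_const))))
    exact hTc.image hcont
  -- diam of each G j is < D
  have hGd : ∀ j, Metric.diam (G j) < D := by
    intro j
    rcases Set.eq_empty_or_nonempty (G j) with h | h
    · rw [h, Metric.diam_empty]; exact hD
    by_contra hcon
    push_neg at hcon
    obtain ⟨z, hzG, w, hwG, hdzw⟩ := isCompact_exists_dist_eq_diam (hGc j) h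
    have hzK : z ∈ K := hGK j hzG
    have hwK : w ∈ K := hGK j hwG
    have hle : Metric.diam (G j) ≤ D := Metric.diam_le_of_forall_dist_le hD.le
      fun x hx y hy => hb x (hGK j hx) y (hGK j hy)
    have hdD : dist z w = D := by rw [hdzw]; linarith
    obtain ⟨⟨x₁, u₁⟩, ⟨hx₁, hu₁, hy₁, hm₁⟩, hz'⟩ := hzG
    obtain ⟨⟨x₂, u₂⟩, ⟨hx₂, hu₂, hy₂, hm₂⟩, hw'⟩ := hwG
    simp only at hz' hw' hx₁ hu₁ hy₁ hm₁ hx₂ hu₂ hy₂ hm₂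
    set u' := D⁻¹ • (w - z) with hu''
    have hwz : ‖w - z‖ = D := by
      rw [← dist_eq_norm, dist_comm]; exact hdD
    have hu' : ‖u'‖ = 1 := by
      rw [hu'', norm_smul, Real.norm_eq_abs, abs_of_pos (inv_pos.mpr hD), hwz]
      field_simp
    have hzu' : z + D • u' = w := by
      rw [hu'', smul_smul, mul_inv_cancel₀ hD.ne']
      simp
    have hwu' : w + D • (-u') = z := by
      rw [smul_neg, ← hzu']
      abel
    -- w has unit normals u₂ and u'
    have hP2 : ∀ zz ∈ K, ⟪zz, u₂⟫ ≤ ⟪w, u₂⟫ := by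
      intro zz hzz
      have := maxpt hD hb hu₂ hx₂ (hw' ▸ hy₂) hzz
      rwa [hw'] at this
    have hP' : ∀ zz ∈ K, ⟪zz, u'⟫ ≤ ⟪w, u'⟫ := by
      intro zz hzz
      have := maxpt hD hb hu' hzK (hzu' ▸ (hzu'.symm ▸ hwK)) hzz
      rwa [hzu'] at this
    obtain ⟨ν, _, huniq⟩ := hsmooth w (frontierpt hKc.isClosed hwK hu' hP')
    have e2 : u₂ = ν := huniq u₂ ⟨hu₂, hP2⟩
    have e2' : u' = ν := huniq u' ⟨hu', hP'⟩
    -- z has unit normals u₁ and -u'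
    have hnu' : ‖-u'‖ = 1 := by rw [norm_neg]; exact hu'
    have hP1 : ∀ zz ∈ K, ⟪zz, u₁⟫ ≤ ⟪z, u₁⟫ := by
      intro zz hzz
      have := maxpt hD hb hu₁ hx₁ (hz' ▸ hy₁) hzz
      rwa [hz'] at this
    have hPn : ∀ zz ∈ K, ⟪zz, -u'⟫ ≤ ⟪z, -u'⟫ := by
      intro zz hzz
      have := maxpt hD hb hnu' hwK (hwu' ▸ (hwu'.symm ▸ hzK)) hzz
      rwa [hwu'] at this
    obtain ⟨μ, _, huniq'⟩ := hsmooth z (frontierpt hKc.isClosed hzK hu₁ hP1)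
    have e1 : u₁ = μ := huniq' u₁ ⟨hu₁, hP1⟩
    have e1' : -u' = μ := huniq' (-u') ⟨hnu', hPn⟩
    have hu12 : u₁ = -u₂ := by rw [e1, ← e1', e2', ← e2]
    -- all ⟪u₁, a k⟫ equal, so u₁ = ± v
    have hu21 : u₂ = -u₁ := by rw [hu12, neg_neg]
    have hall : ∀ k, ⟪u₁, a k⟫ = ⟪u₁, a j⟫ := by
      intro k
      refine le_antisymm (hm₁ k) ?_
      have h2 := hm₂ k
      rw [hu21, inner_neg_left, inner_neg_left] at h2
      linarith
    have hform : ∀ k, (if 0 ≤ v k then (1:ℝ) else -1) * (u₁ k - v k * ⟪u₁, v⟫) =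
        (if 0 ≤ v j then (1:ℝ) else -1) * (u₁ j - v j * ⟪u₁, v⟫) := by
      intro k
      rw [← hinner_a, ← hinner_a]
      exact hall k
    rcases lin_alg hv1 hu₁ hform with hcase | hcase
    · have hmem : x₁ + D • v = z := by rw [← hcase]; exact hz'
      exact hvN x₁ hx₁ (hmem ▸ hzK)
    · have hmem : z + D • v = x₁ := by rw [← hz', hcase, smul_neg]; abel
      exact hvN z hzK (hmem ▸ hx₁)
  -- choose margin
  set M := Finset.univ.sup' Finset.univ_nonempty (fun j => Metric.diam (G j)) with hM'
  have hM : M < D := by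
    rw [hM']
    exact (Finset.sup'_lt_iff Finset.univ_nonempty).mpr fun j _ => hGd j
  have hMd : ∀ j, Metric.diam (G j) ≤ M := by
    intro j
    rw [hM']
    exact Finset.le_sup' (fun j => Metric.diam (G j)) (Finset.mem_univ j)
  set ε := (D - M)/3 with hε'
  have hε : 0 < ε := by rw [hε']; linarith
  set Y := {y | y ∈ K ∧ ∃ x ∈ K, dist x y = D} with hY'
  set S : Fin n → Set (EuclideanSpace ℝ (Fin n)) := fun j =>
    {z | z ∈ K ∧ ∃ g ∈ G j, dist z g ≤ ε} with hS'
  set X : Fin n → Set (EuclideanSpace ℝ (Fin n)) := fun j =>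
    (K ∩ {z | ε ≤ Metric.infDist z Y}) ∪ closure (S j) with hX'
  have hSK : ∀ j, S j ⊆ K := fun j z hz => hz.1
  have hXK : ∀ j, X j ⊆ K := fun j =>
    Set.union_subset Set.inter_subset_left (closure_minimal (hSK j) hKc.isClosed)
  refine ⟨X, ?_, ?_⟩
  · -- cover
    apply Set.Subset.antisymm
    · intro z hz
      rcases le_or_gt ε (Metric.infDist z Y) with h | h
      · exact Set.mem_iUnion.mpr ⟨⟨0, hn⟩, Or.inl ⟨hz, h⟩⟩
      · have hYne : Y.Nonempty := by
          obtain ⟨p, hp, q, hq, hpq⟩ := isCompact_exists_dist_eq_diam hKc hKne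
          exact ⟨q, hq, p, hp, hpq⟩
        obtain ⟨y, hy, hdzy⟩ := (Metric.infDist_lt_iff hYne).mp h
        obtain ⟨hyK, x, hxK, hdxy⟩ := hy
        set u' := D⁻¹ • (y - x) with hu''
        have hyx : ‖y - x‖ = D := by rw [← dist_eq_norm, dist_comm]; exact hdxy
        have hu' : ‖u'‖ = 1 := by
          rw [hu'', norm_smul, Real.norm_eq_abs, abs_of_pos (inv_pos.mpr hD), hyx]
          field_simp
        have hxy : x + D • u' = y := by
          rw [hu'', smul_smul, mul_inv_cancel₀ hD.ne']
          simp
        obtain ⟨j, _, hj⟩ := Finset.exists_max_image Finset.univ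
          (fun k => ⟪u', a k⟫) ⟨⟨0, hn⟩, Finset.mem_univ _⟩
        have hyKmem : x + D • u' ∈ K := by rw [hxy]; exact hyK
        have hyG : y ∈ G j :=
          ⟨(x, u'), ⟨hxK, hu', hyKmem, fun k => hj k (Finset.mem_univ k)⟩, hxy⟩
        exact Set.mem_iUnion.mpr ⟨j, Or.inr (subset_closure ⟨hz, y, hyG, hdzy.le⟩)⟩
    · exact Set.iUnion_subset hXK
  · intro j
    by_contra hcon
    push_neg at hcon
    have hXcl : IsClosed (X j) :=
      ((hKc.isClosed.inter (isClosed_le continuous_const (Metric.continuous_infDist_pt Y))).union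
        isClosed_closure)
    have hXc : IsCompact (X j) := hKc.of_isClosed_subset hXcl (hXK j)
    have hXne : (X j).Nonempty := by
      by_contra hne
      rw [Set.not_nonempty_iff_eq_empty] at hne
      rw [hne, Metric.diam_empty] at hcon
      linarith
    obtain ⟨z, hz, w, hw, hzw⟩ := isCompact_exists_dist_eq_diam hXc hXne
    have hXle : Metric.diam (X j) ≤ D := Metric.diam_le_of_forall_dist_le hD.le
      fun x hx y hy => hb x (hXK j hx) y (hXK j hy)
    have hdzw : dist z w = D := by rw [hzw]; linarith
    have hzK := hXK j hz
    have hwK := hXK j hw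
    have hzY : z ∈ Y := ⟨hzK, w, hwK, by rw [dist_comm]; exact hdzw⟩
    have hwY : w ∈ Y := ⟨hwK, z, hzK, hdzw⟩
    have hz2 : z ∈ closure (S j) := by
      rcases hz with hcl | hcl
      · exfalso
        have h0 : ε ≤ Metric.infDist z Y := hcl.2
        have h1 := Metric.infDist_zero_of_mem hzY
        rw [h1] at h0
        linarith
      · exact hcl
    have hw2 : w ∈ closure (S j) := by
      rcases hw with hcl | hcl
      · exfalso
        have h0 : ε ≤ Metric.infDist w Y := hcl.2
        have h1 := Metric.infDist_zero_of_mem hwY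
        rw [h1] at h0
        linarith
      · exact hcl
    have hSsub : closure (S j) ⊆ {z | Metric.infDist z (G j) ≤ ε} :=
      closure_minimal (fun z hz => by
        obtain ⟨_, g, hg, hd⟩ := hz
        exact le_trans (Metric.infDist_le_dist_of_mem hg) hd)
        (isClosed_le (Metric.continuous_infDist_pt _) continuous_const)
    have hGne : (G j).Nonempty := by
      have hSne : (S j).Nonempty := closure_nonempty_iff.mp ⟨z, hz2⟩
      obtain ⟨z', _, g, hg, _⟩ := hSne
      exact ⟨g, hg⟩
    obtain ⟨g, hgG, hgd⟩ := (hGc j).exists_infDist_eq_dist hGne z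
    have hzg : dist z g ≤ ε := by rw [← hgd]; exact hSsub hz2
    obtain ⟨g', hgG', hgd'⟩ := (hGc j).exists_infDist_eq_dist hGne w
    have hwg : dist g' w ≤ ε := by rw [dist_comm, ← hgd']; exact hSsub hw2
    have hgg : dist g g' ≤ M :=
      le_trans (Metric.dist_le_diam_of_mem (hGc j).isBounded hgG hgG') (hMd j)
    have htri : dist z w ≤ dist z g + dist g g' + dist g' w := dist_triangle4 z g g' w
    rw [hdzw] at htri
    rw [hε'] at hzg hwg
    linarith
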